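/- In the braid group B∞, for all 1 ≤ k ≤ l, the descending product of square roots of free generators satisfies γ_l γ_{l−1} γ_{l−2} ⋯ γ_{k+1} γ_k = (σ_1 σ_2 ⋯ σ_{l−1} σ_l)(σ_{k−1}^{−1} σ_{k−2}^{−1} ⋯ σ_2^{−1} σ_1^{−1}). -/

import Mathlib

/-- The Artin braid relations on the free group with generators `σ_i`, `i ∈ ℕ+`. -/
def braidRels : Set (FreeGroup ℕ+) :=
  {r | ∃ i j : ℕ+,
    ((j : ℕ) = (i : ℕ) + 1 ∧
      r = FreeGroup.of i * FreeGroup.of j * FreeGroup.of i *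
          (FreeGroup.of j * FreeGroup.of i * FreeGroup.of j)⁻¹) ∨
    ((i : ℕ) + 1 < (j : ℕ) ∧
      r = FreeGroup.of i * FreeGroup.of j * (FreeGroup.of j * FreeGroup.of i)⁻¹)}

/-- The braid group `B∞` on infinitely many strands, presented by the Artin generators
`σ_1, σ_2, …` subject to the braid relations. -/
abbrev BraidInf : Type := PresentedGroup braidRels

/-- The Artin generator `σ_n` of `B∞` for `n ≥ 1`, with the paper's convention `σ_0 = 1`. -/
def sig (n : ℕ) : BraidInf :=
  if h : 0 < n then PresentedGroup.of (⟨n, h⟩ : ℕ+) else 1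

/-- Ascending product `f a * f (a+1) * ⋯ * f b` (equal to `1` when `b < a`). -/
def ascProd {G : Type*} [Monoid G] (f : ℕ → G) (a b : ℕ) : G :=
  ((List.range' a (b + 1 - a)).map f).prod

/-- Descending product `f b * f (b-1) * ⋯ * f a` (equal to `1` when `b < a`). -/
def descProd {G : Type*} [Monoid G] (f : ℕ → G) (b a : ℕ) : G :=
  (((List.range' a (b + 1 - a)).map f).reverse).prod

/-- The square roots of free generators
`γ_k = (σ_1 ⋯ σ_{k−1}) σ_k (σ_{k−1}^{−1} ⋯ σ_1^{−1})` of `B∞`. -/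
def γ (k : ℕ) : BraidInf :=
  ascProd sig 1 (k - 1) * sig k * descProd (fun i => (sig i)⁻¹) (k - 1) 1

/-- The subgroup `B_n` of `B∞` generated by `σ_1, …, σ_{n−1}`. -/
def Bsub (n : ℕ) : Subgroup BraidInf :=
  Subgroup.closure {x | ∃ i : ℕ, 1 ≤ i ∧ i < n ∧ x = sig i}

/-- The subgroup `B_{m,∞}` of `B∞` generated by `{σ_k : k ≥ m}`. -/
def BFrom (m : ℕ) : Subgroup BraidInf :=
  Subgroup.closure {x | ∃ i : ℕ, m ≤ i ∧ x = sig i}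

theorem braid_rel1 {i j : ℕ+} (h : (j : ℕ) = (i : ℕ) + 1) :
    (PresentedGroup.of i : BraidInf) * .of j * .of i = .of j * .of i * .of j := by
  have h1 : (FreeGroup.of i * FreeGroup.of j * FreeGroup.of i *
      (FreeGroup.of j * FreeGroup.of i * FreeGroup.of j)⁻¹) ∈ braidRels :=
    ⟨i, j, Or.inl ⟨h, rfl⟩⟩
  have h2 : (PresentedGroup.mk braidRels) (FreeGroup.of i * FreeGroup.of j * FreeGroup.of i *
      (FreeGroup.of j * FreeGroup.of i * FreeGroup.of j)⁻¹) = 1 :=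
    (QuotientGroup.eq_one_iff _).mpr (Subgroup.subset_normalClosure h1)
  simp only [map_mul, map_inv] at h2
  exact mul_inv_eq_one.mp h2

theorem braid_rel2 {i j : ℕ+} (h : (i : ℕ) + 1 < (j : ℕ)) :
    (PresentedGroup.of i : BraidInf) * .of j = .of j * .of i := by
  have h1 : (FreeGroup.of i * FreeGroup.of j * (FreeGroup.of j * FreeGroup.of i)⁻¹) ∈ braidRels :=
    ⟨i, j, Or.inr ⟨h, rfl⟩⟩
  have h2 : (PresentedGroup.mk braidRels) (FreeGroup.of i * FreeGroup.of j *
      (FreeGroup.of j * FreeGroup.of i)⁻¹) = 1 :=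
    (QuotientGroup.eq_one_iff _).mpr (Subgroup.subset_normalClosure h1)
  simp only [map_mul, map_inv] at h2
  exact mul_inv_eq_one.mp h2

theorem shMap_rels : ∀ r ∈ braidRels,
    FreeGroup.lift (fun i : ℕ+ => (PresentedGroup.of (i + 1) : BraidInf)) r = 1 := by
  rintro r ⟨i, j, ⟨h, rfl⟩ | ⟨h, rfl⟩⟩
  · simp only [map_mul, map_inv, FreeGroup.lift_apply_of]
    rw [mul_inv_eq_one]
    exact braid_rel1 (by push_cast; omega)
  · simp only [map_mul, map_inv, FreeGroup.lift_apply_of]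
    rw [mul_inv_eq_one]
    exact braid_rel2 (by push_cast; omega)

/-- The shift endomorphism `sh` of `B∞`, determined by `sh(σ_i) = σ_{i+1}`. -/
def sh : BraidInf →* BraidInf := PresentedGroup.toGroup shMap_rels

/-- The `m`-shift `sh_m(τ) = σ_m σ_{m−1} ⋯ σ_1 ⬝ sh(τ) ⬝ σ_1^{−1} ⋯ σ_{m−1}^{−1} σ_m^{−1}`. -/
def shm (m : ℕ) (τ : BraidInf) : BraidInf :=
  descProd sig m 1 * sh τ * ascProd (fun i => (sig i)⁻¹) 1 m

lemma ascProd_succ {G : Type*} [Monoid G] (f : ℕ → G) (a b : ℕ) (h : a ≤ b + 1) :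
    ascProd f a (b + 1) = ascProd f a b * f (b + 1) := by
  unfold ascProd
  have h1 : b + 1 + 1 - a = (b + 1 - a) + 1 := by omega
  rw [h1, List.range'_concat, List.map_append, List.prod_append]
  have h2 : a + (b + 1 - a) = b + 1 := by omega
  simp [h2]

lemma descProd_succ {G : Type*} [Monoid G] (f : ℕ → G) (a b : ℕ) (h : a ≤ b + 1) :
    descProd f (b + 1) a = f (b + 1) * descProd f b a := by
  unfold descProd
  have h1 : b + 1 + 1 - a = (b + 1 - a) + 1 := by omega
  rw [h1, List.range'_concat, List.map_append, List.reverse_append, List.prod_append]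
  have h2 : a + (b + 1 - a) = b + 1 := by omega
  simp [h2]

lemma descProd_inv {G : Type*} [Group G] (f : ℕ → G) (a b : ℕ) :
    descProd (fun i => (f i)⁻¹) b a = (ascProd f a b)⁻¹ := by
  unfold descProd ascProd
  induction (List.range' a (b + 1 - a)) with
  | nil => simp
  | cons x l ih => simp [ih, mul_comm]

/-- In `B∞`, for `1 ≤ k ≤ l`:
`γ_l γ_{l−1} ⋯ γ_{k+1} γ_k = (σ_1 σ_2 ⋯ σ_{l−1} σ_l)(σ_{k−1}⁻¹ σ_{k−2}⁻¹ ⋯ σ_2⁻¹ σ_1⁻¹)`. -/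
theorem descProd_gamma_eq (k l : ℕ) (hk : 1 ≤ k) (hkl : k ≤ l) :
    descProd γ l k = ascProd sig 1 l * descProd (fun i => (sig i)⁻¹) (k - 1) 1 := by
  induction l, hkl using Nat.le_induction with
  | base =>
    have hk1 : k = (k - 1) + 1 := by omega
    have hb : descProd γ k k = γ k := by
      have h : k + 1 - k = 1 := by omega
      simp [descProd, h]
    have ha : ascProd sig 1 k = ascProd sig 1 (k - 1) * sig k := by
      conv_lhs => rw [hk1]
      rw [ascProd_succ sig 1 (k - 1) (by omega), ← hk1]
    rw [hb, ha]
    rfl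
  | succ l hl ih =>
    rw [descProd_succ γ k l (by omega), ih, ascProd_succ sig 1 l (by omega)]
    have hγ : γ (l + 1) = ascProd sig 1 l * sig (l + 1) * (ascProd sig 1 l)⁻¹ := by
      unfold γ
      rw [descProd_inv]
      simp
    rw [hγ]
    group
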